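/- For three memories with J₁ = {j : ξ²_j = ξ³_j}, J₂ = {j : ξ²_j ≠ ξ³_j} both nonempty and J₁₁ = {j ∈ J₁ : ξ¹_j = ξ²_j} ≠ ∅, J₁₂ = {j ∈ J₁ : ξ¹_j = −ξ²_j} ≠ ∅, the vector x* with x*_i = |J₁₂| on J₁₁, x*_i = −|J₁₁| on J₁₂, 0 elsewhere, is an eigenvector of the Jacobian I_{ξ¹} with eigenvalue (|J₁| − |J₂|)/N − 2ε. -/
import Mathlib


/-- For three memories, the vector x* (= |J₁₂| on J₁₁, −|J₁₁| on J₁₂, 0 elsewhere)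
is an eigenvector of the Jacobian I_{ξ¹} with eigenvalue (|J₁| − |J₂|)/N − 2ε. -/
theorem stmt_17 (N : ℕ) (hN : 1 ≤ N) (ε : ℝ) (ξ1 ξ2 ξ3 : Fin N → ℝ)
    (hξ1 : ∀ i, ξ1 i = 1 ∨ ξ1 i = -1) (hξ2 : ∀ i, ξ2 i = 1 ∨ ξ2 i = -1)
    (hξ3 : ∀ i, ξ3 i = 1 ∨ ξ3 i = -1)
    (h12 : ξ1 ≠ ξ2) (h12' : ξ1 ≠ -ξ2) (h13 : ξ1 ≠ ξ3) (h13' : ξ1 ≠ -ξ3)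
    (h23 : ξ2 ≠ ξ3) (h23' : ξ2 ≠ -ξ3)
    (S : Matrix (Fin N) (Fin N) ℝ)
    (hS : ∀ i j, S i j = ξ1 i * ξ1 j + ξ2 i * ξ2 j + ξ3 i * ξ3 j)
    (hJ1ne : (Finset.univ.filter (fun j => ξ2 j = ξ3 j)).Nonempty)
    (hJ2ne : (Finset.univ.filter (fun j => ξ2 j ≠ ξ3 j)).Nonempty)
    (hJ11ne : (Finset.univ.filter (fun j => ξ2 j = ξ3 j ∧ ξ1 j = ξ2 j)).Nonempty)
    (hJ12ne : (Finset.univ.filter (fun j => ξ2 j = ξ3 j ∧ ξ1 j = -ξ2 j)).Nonempty)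
    (I : Matrix (Fin N) (Fin N) ℝ)
    (hI : ∀ i j, I i j =
      if i = j then
        -(1 / N) * (∑ k ∈ Finset.univ.erase i, S i k * ξ1 i * ξ1 k) - 2 * ε * (N - 1) / N
      else (1 / N) * (S i j * ξ1 i * ξ1 j) + 2 * ε / N)
    (x : Fin N → ℝ)
    (hx : ∀ i, x i =
      if ξ2 i = ξ3 i ∧ ξ1 i = ξ2 i then
        ((Finset.univ.filter (fun j => ξ2 j = ξ3 j ∧ ξ1 j = -ξ2 j)).card : ℝ)
      else if ξ2 i = ξ3 i ∧ ξ1 i = -ξ2 i then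
        -((Finset.univ.filter (fun j => ξ2 j = ξ3 j ∧ ξ1 j = ξ2 j)).card : ℝ)
      else 0) :
    I.mulVec x =
      ((((Finset.univ.filter (fun j => ξ2 j = ξ3 j)).card : ℝ) -
        ((Finset.univ.filter (fun j => ξ2 j ≠ ξ3 j)).card : ℝ)) / N - 2 * ε) • x := by
  have hNR : (N : ℝ) ≠ 0 := Nat.cast_ne_zero.mpr (by omega)
  have sq1 : ∀ i, ξ1 i * ξ1 i = 1 := fun i => by rcases hξ1 i with h | h <;> rw [h] <;> norm_num
  have sq2 : ∀ i, ξ2 i * ξ2 i = 1 := fun i => by rcases hξ2 i with h | h <;> rw [h] <;> norm_num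
  have sq3 : ∀ i, ξ3 i * ξ3 i = 1 := fun i => by rcases hξ3 i with h | h <;> rw [h] <;> norm_num
  have hdisj : ∀ j, ξ1 j = ξ2 j → ξ1 j = -ξ2 j → False := by
    intro j h1 h2
    have h0 : ξ2 j = 0 := by rw [h1] at h2; linarith
    rcases hξ2 j with h | h <;> rw [h] at h0 <;> norm_num at h0
  have hdichot : ∀ j, ξ1 j = ξ2 j ∨ ξ1 j = -ξ2 j := fun j => by
    rcases hξ1 j with h | h <;> rcases hξ2 j with h' | h' <;> rw [h, h'] <;> norm_num
  have hopp : ∀ j, ξ2 j ≠ ξ3 j → ξ3 j = -ξ2 j := by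
    intro j hne
    rcases hξ2 j with h | h <;> rcases hξ3 j with h' | h' <;> rw [h, h'] at hne ⊢ <;>
      first | (exact absurd rfl hne) | norm_num
  set J11 := Finset.univ.filter (fun j => ξ2 j = ξ3 j ∧ ξ1 j = ξ2 j) with hJ11
  set J12 := Finset.univ.filter (fun j => ξ2 j = ξ3 j ∧ ξ1 j = -ξ2 j) with hJ12
  set J1 := Finset.univ.filter (fun j => ξ2 j = ξ3 j) with hJ1
  set J2 := Finset.univ.filter (fun j => ξ2 j ≠ ξ3 j) with hJ2
  set a : ℝ := (J11.card : ℝ) with ha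
  set b : ℝ := (J12.card : ℝ) with hb
  set c1 : ℝ := (J1.card : ℝ) with hc1
  set c2 : ℝ := (J2.card : ℝ) with hc2
  -- cardinality relations
  have hcard12 : c1 + c2 = (N : ℝ) := by
    rw [hc1, hc2, hJ1, hJ2]
    have := Finset.card_filter_add_card_filter_not
      (s := (Finset.univ : Finset (Fin N))) (p := fun j => ξ2 j = ξ3 j)
    rw [Finset.card_univ, Fintype.card_fin] at this
    push_cast [← this]
    norm_num
  have hcard11 : a + b = c1 := by
    rw [ha, hb, hc1]
    have h1 : J11 = J1.filter (fun j => ξ1 j = ξ2 j) := by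
      rw [hJ11, hJ1, Finset.filter_filter]
    have h2 : J12 = J1.filter (fun j => ¬ ξ1 j = ξ2 j) := by
      rw [hJ12, hJ1, Finset.filter_filter]
      apply Finset.filter_congr
      intro j _
      constructor
      · rintro ⟨h', h''⟩
        exact ⟨h', fun hc => hdisj j hc h''⟩
      · rintro ⟨h', h''⟩
        exact ⟨h', (hdichot j).resolve_left h''⟩
    rw [h1, h2]
    have := Finset.card_filter_add_card_filter_not
      (s := J1) (p := fun j => ξ1 j = ξ2 j)
    push_cast [← this]
    ring
  -- the generic sum over x
  have hxsum : ∀ f : Fin N → ℝ,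
      ∑ j, f j * x j = (∑ j ∈ J11, f j) * b - (∑ j ∈ J12, f j) * a := by
    intro f
    have hpt : ∀ j ∈ (Finset.univ : Finset (Fin N)), f j * x j =
        (if ξ2 j = ξ3 j ∧ ξ1 j = ξ2 j then f j else 0) * b
        - (if ξ2 j = ξ3 j ∧ ξ1 j = -ξ2 j then f j else 0) * a := by
      intro j _
      rw [hx j]
      by_cases h1 : ξ2 j = ξ3 j ∧ ξ1 j = ξ2 j
      · have h2 : ¬(ξ2 j = ξ3 j ∧ ξ1 j = -ξ2 j) := fun hq => hdisj j h1.2 hq.2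
        simp only [if_pos h1, if_neg h2]
        ring
      · by_cases h2 : ξ2 j = ξ3 j ∧ ξ1 j = -ξ2 j
        · simp only [if_neg h1, if_pos h2]
          ring
        · simp only [if_neg h1, if_neg h2]
          ring
    rw [Finset.sum_congr rfl hpt, Finset.sum_sub_distrib,
      ← Finset.sum_mul, ← Finset.sum_mul, ← Finset.sum_filter, ← Finset.sum_filter]
  -- specific finite sums
  have hs11_1 : ∑ j ∈ J11, (1 : ℝ) = a := by simp [ha]
  have hs12_1 : ∑ j ∈ J12, (1 : ℝ) = b := by simp [hb]
  have hs11_2 : ∑ j ∈ J11, ξ1 j * ξ2 j = a := by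
    rw [← hs11_1]
    apply Finset.sum_congr rfl
    intro j hj
    rw [hJ11, Finset.mem_filter] at hj
    rw [hj.2.2]; exact sq2 j
  have hs11_3 : ∑ j ∈ J11, ξ1 j * ξ3 j = a := by
    rw [← hs11_1]
    apply Finset.sum_congr rfl
    intro j hj
    rw [hJ11, Finset.mem_filter] at hj
    rw [hj.2.2, hj.2.1]; exact sq3 j
  have hs12_2 : ∑ j ∈ J12, ξ1 j * ξ2 j = -b := by
    rw [← hs12_1]
    rw [← Finset.sum_neg_distrib]
    apply Finset.sum_congr rfl
    intro j hj
    rw [hJ12, Finset.mem_filter] at hj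
    rw [hj.2.2, neg_mul, sq2 j]
  have hs12_3 : ∑ j ∈ J12, ξ1 j * ξ3 j = -b := by
    rw [← hs12_1]
    rw [← Finset.sum_neg_distrib]
    apply Finset.sum_congr rfl
    intro j hj
    rw [hJ12, Finset.mem_filter] at hj
    rw [hj.2.2, ← hj.2.1, neg_mul, sq2 j]
  -- the sum Σ ξ1 (ξ2 + ξ3)
  have hSD : ∑ j, ξ1 j * (ξ2 j + ξ3 j) = 2 * a - 2 * b := by
    have hpt : ∀ j ∈ (Finset.univ : Finset (Fin N)), ξ1 j * (ξ2 j + ξ3 j) =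
        (if ξ2 j = ξ3 j ∧ ξ1 j = ξ2 j then (2 : ℝ) else 0)
        + (if ξ2 j = ξ3 j ∧ ξ1 j = -ξ2 j then (-2 : ℝ) else 0) := by
      intro j _
      by_cases h : ξ2 j = ξ3 j
      · rcases hdichot j with h' | h'
        · have h2 : ¬(ξ2 j = ξ3 j ∧ ξ1 j = -ξ2 j) := fun hq => hdisj j h' hq.2
          rw [if_pos ⟨h, h'⟩, if_neg h2, h', ← h]
          linear_combination 2 * sq2 j
        · have h1 : ¬(ξ2 j = ξ3 j ∧ ξ1 j = ξ2 j) := fun hq => hdisj j hq.2 h'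
          rw [if_neg h1, if_pos ⟨h, h'⟩, h', ← h]
          linear_combination (-2 : ℝ) * sq2 j
      · have h1 : ¬(ξ2 j = ξ3 j ∧ ξ1 j = ξ2 j) := fun hq => h hq.1
        have h2 : ¬(ξ2 j = ξ3 j ∧ ξ1 j = -ξ2 j) := fun hq => h hq.1
        rw [if_neg h1, if_neg h2, hopp j h]
        ring
    rw [Finset.sum_congr rfl hpt, Finset.sum_add_distrib, ← Finset.sum_filter, ← Finset.sum_filter]
    rw [← hJ11, ← hJ12]
    rw [Finset.sum_const, Finset.sum_const]
    rw [nsmul_eq_mul, nsmul_eq_mul, ha, hb]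
    ring
  -- main computation
  funext i
  simp only [Matrix.mulVec, dotProduct, Pi.smul_apply, smul_eq_mul]
  rw [← Finset.sum_erase_add Finset.univ _ (Finset.mem_univ i)]
  have hoff : ∀ j ∈ Finset.univ.erase i, I i j * x j =
      ((1 / (N : ℝ)) * (S i j * ξ1 i * ξ1 j) + 2 * ε / N) * x j := by
    intro j hj
    rw [hI i j, if_neg (Ne.symm (Finset.ne_of_mem_erase hj))]
  rw [Finset.sum_congr rfl hoff]
  have herase : ∑ j ∈ Finset.univ.erase i, ((1 / (N : ℝ)) * (S i j * ξ1 i * ξ1 j) + 2 * ε / N) * x j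
      = (∑ j, ((1 / (N : ℝ)) * (S i j * ξ1 i * ξ1 j) + 2 * ε / N) * x j)
        - ((1 / (N : ℝ)) * (S i i * ξ1 i * ξ1 i) + 2 * ε / N) * x i := by
    rw [← Finset.sum_erase_add Finset.univ
      (fun j => ((1 / (N : ℝ)) * (S i j * ξ1 i * ξ1 j) + 2 * ε / N) * x j) (Finset.mem_univ i)]
    ring
  rw [herase, hI i i, if_pos rfl]
  have hSii : S i i * ξ1 i * ξ1 i = 3 := by
    rcases hξ1 i with h | h <;> rcases hξ2 i with h' | h' <;> rcases hξ3 i with h'' | h'' <;>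
      rw [hS i i, h, h', h''] <;> norm_num
  have hSpt : ∀ j ∈ (Finset.univ : Finset (Fin N)),
      ((1 / (N : ℝ)) * (S i j * ξ1 i * ξ1 j) + 2 * ε / N) * x j
      = (1 / (N : ℝ)) * ((1 : ℝ) * x j)
        + ((1 / (N : ℝ)) * (ξ1 i * ξ2 i)) * (ξ1 j * ξ2 j * x j)
        + ((1 / (N : ℝ)) * (ξ1 i * ξ3 i)) * (ξ1 j * ξ3 j * x j)
        + (2 * ε / N) * ((1 : ℝ) * x j) := by
    intro j _
    rw [hS i j]
    linear_combination (x j * (1 / (N : ℝ)) * (ξ1 j * ξ1 j)) * sq1 i + (x j * (1 / (N : ℝ))) * sq1 j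
  have hfull : ∑ j, ((1 / (N : ℝ)) * (S i j * ξ1 i * ξ1 j) + 2 * ε / N) * x j
      = (1 / (N : ℝ)) * (a * b - b * a)
        + ((1 / (N : ℝ)) * (ξ1 i * ξ2 i)) * (a * b + b * a)
        + ((1 / (N : ℝ)) * (ξ1 i * ξ3 i)) * (a * b + b * a)
        + (2 * ε / N) * (a * b - b * a) := by
    have hxA : ∑ j, (1 : ℝ) * x j = a * b - b * a := by
      rw [hxsum (fun _ => (1 : ℝ)), hs11_1, hs12_1]
    have hxB : ∑ j, ξ1 j * ξ2 j * x j = a * b + b * a := by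
      rw [hxsum (fun j => ξ1 j * ξ2 j), hs11_2, hs12_2]; ring
    have hxC : ∑ j, ξ1 j * ξ3 j * x j = a * b + b * a := by
      rw [hxsum (fun j => ξ1 j * ξ3 j), hs11_3, hs12_3]; ring
    have T1 : ∑ j, (1 / (N : ℝ)) * ((1 : ℝ) * x j) = (1 / (N : ℝ)) * (a * b - b * a) := by
      rw [← Finset.mul_sum, hxA]
    have T2 : ∑ j, ((1 / (N : ℝ)) * (ξ1 i * ξ2 i)) * (ξ1 j * ξ2 j * x j)
        = ((1 / (N : ℝ)) * (ξ1 i * ξ2 i)) * (a * b + b * a) := by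
      rw [← Finset.mul_sum, hxB]
    have T3 : ∑ j, ((1 / (N : ℝ)) * (ξ1 i * ξ3 i)) * (ξ1 j * ξ3 j * x j)
        = ((1 / (N : ℝ)) * (ξ1 i * ξ3 i)) * (a * b + b * a) := by
      rw [← Finset.mul_sum, hxC]
    have T4 : ∑ j, (2 * ε / (N : ℝ)) * ((1 : ℝ) * x j) = (2 * ε / (N : ℝ)) * (a * b - b * a) := by
      rw [← Finset.mul_sum, hxA]
    rw [Finset.sum_congr rfl hSpt, Finset.sum_add_distrib, Finset.sum_add_distrib,
      Finset.sum_add_distrib, T1, T2, T3, T4]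
  rw [hfull, hSii]
  have hc2' : c2 = (N : ℝ) - a - b := by linarith
  by_cases hP : ξ2 i = ξ3 i
  · rcases hdichot i with hQ | hQ
    · -- i ∈ J11
      have hxi : x i = b := by rw [hx i, if_pos ⟨hP, hQ⟩]
      have e2 : ξ1 i * ξ2 i = 1 := by rw [hQ]; exact sq2 i
      have e3 : ξ1 i * ξ3 i = 1 := by rw [hQ, hP]; exact sq3 i
      have hD : ∑ k ∈ Finset.univ.erase i, S i k * ξ1 i * ξ1 k
          = (N : ℝ) + (2 * a - 2 * b) - 3 := by
        have hpt : ∀ k ∈ Finset.univ.erase i, S i k * ξ1 i * ξ1 k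
            = 1 + ξ1 k * (ξ2 k + ξ3 k) := by
          intro k _
          rw [hS i k, hQ, hP]
          linear_combination (ξ1 k * (ξ1 k + ξ2 k + ξ3 k)) * sq3 i + sq1 k
        rw [Finset.sum_congr rfl hpt]
        have h1 : ∑ k ∈ Finset.univ.erase i, (1 + ξ1 k * (ξ2 k + ξ3 k))
            = (∑ k, (1 + ξ1 k * (ξ2 k + ξ3 k))) - (1 + ξ1 i * (ξ2 i + ξ3 i)) := by
          rw [← Finset.sum_erase_add Finset.univ
            (fun k => 1 + ξ1 k * (ξ2 k + ξ3 k)) (Finset.mem_univ i)]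
          ring
        rw [h1, Finset.sum_add_distrib, Finset.sum_const, Finset.card_univ, Fintype.card_fin,
          nsmul_eq_mul, hSD]
        have h2 : ξ1 i * (ξ2 i + ξ3 i) = 2 := by
          rw [hQ, hP]; linear_combination 2 * sq3 i
        rw [h2]; ring
      rw [hD, hxi, e2, e3, ← hcard11, hc2']
      field_simp
      ring
    · -- i ∈ J12
      have hnP : ¬(ξ2 i = ξ3 i ∧ ξ1 i = ξ2 i) := fun hq => hdisj i hq.2 hQ
      have hxi : x i = -a := by rw [hx i, if_neg hnP, if_pos ⟨hP, hQ⟩]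
      have e2 : ξ1 i * ξ2 i = -1 := by rw [hQ, neg_mul, sq2 i]
      have e3 : ξ1 i * ξ3 i = -1 := by rw [hQ, ← hP, neg_mul, sq2 i]
      have hD : ∑ k ∈ Finset.univ.erase i, S i k * ξ1 i * ξ1 k
          = (N : ℝ) - (2 * a - 2 * b) - 3 := by
        have hpt : ∀ k ∈ Finset.univ.erase i, S i k * ξ1 i * ξ1 k
            = 1 - ξ1 k * (ξ2 k + ξ3 k) := by
          intro k _
          rw [hS i k, hQ, hP]
          linear_combination (ξ1 k * (ξ1 k - ξ2 k - ξ3 k)) * sq3 i + sq1 k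
        rw [Finset.sum_congr rfl hpt]
        have h1 : ∑ k ∈ Finset.univ.erase i, (1 - ξ1 k * (ξ2 k + ξ3 k))
            = (∑ k, (1 - ξ1 k * (ξ2 k + ξ3 k))) - (1 - ξ1 i * (ξ2 i + ξ3 i)) := by
          rw [← Finset.sum_erase_add Finset.univ
            (fun k => 1 - ξ1 k * (ξ2 k + ξ3 k)) (Finset.mem_univ i)]
          ring
        rw [h1, Finset.sum_sub_distrib, Finset.sum_const, Finset.card_univ, Fintype.card_fin,
          nsmul_eq_mul, hSD]
        have h2 : ξ1 i * (ξ2 i + ξ3 i) = -2 := by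
          rw [hQ, hP]; linear_combination (-2 : ℝ) * sq3 i
        rw [h2]; ring
      rw [hD, hxi, e2, e3, ← hcard11, hc2']
      field_simp
      ring
  · -- i ∈ J2
    have hn1 : ¬(ξ2 i = ξ3 i ∧ ξ1 i = ξ2 i) := fun hq => hP hq.1
    have hn2 : ¬(ξ2 i = ξ3 i ∧ ξ1 i = -ξ2 i) := fun hq => hP hq.1
    have hxi : x i = 0 := by rw [hx i, if_neg hn1, if_neg hn2]
    have e3 : ξ1 i * ξ3 i = -(ξ1 i * ξ2 i) := by rw [hopp i hP]; ring
    rw [hxi, e3]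
    ring
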